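/- For every boolean function f : {0,1}^n → {0,1} with n ≥ 2 and wt(f) < log₂ n, D_ave(f) ≤ 5. -/

import Mathlib

/-- Decision trees over `n` boolean variables. -/
inductive DTree (n : ℕ) : Type where
  | leaf : Bool → DTree n
  | node : Fin n → DTree n → DTree n → DTree n

namespace DTree

/-- Evaluate a decision tree on an input. -/
def eval {n : ℕ} : DTree n → (Fin n → Bool) → Bool
  | leaf b, _ => b
  | node i t0 t1, x => if x i then eval t1 x else eval t0 x

/-- Number of queries made on input `x`. -/
def cost {n : ℕ} : DTree n → (Fin n → Bool) → ℕ
  | leaf _, _ => 0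
  | node i t0 t1, x => 1 + (if x i then cost t1 x else cost t0 x)

/-- Depth of a decision tree. -/
def depth {n : ℕ} : DTree n → ℕ
  | leaf _ => 0
  | node _ t0 t1 => 1 + max (depth t0) (depth t1)

end DTree

/-- `T` computes `f` with zero error. -/
def Computes {n : ℕ} (T : DTree n) (f : (Fin n → Bool) → Bool) : Prop :=
  ∀ x, T.eval x = f x

/-- Average cost of a decision tree under the uniform distribution. -/
noncomputable def avgCost {n : ℕ} (T : DTree n) : ℝ :=
  (∑ x : Fin n → Bool, (T.cost x : ℝ)) / 2 ^ n

/-- Average-case deterministic query complexity under the uniform distribution. -/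
noncomputable def Dave {n : ℕ} (f : (Fin n → Bool) → Bool) : ℝ :=
  sInf {c : ℝ | ∃ T : DTree n, Computes T f ∧ avgCost T = c}

/-- Worst-case deterministic query complexity. -/
noncomputable def Dworst {n : ℕ} (f : (Fin n → Bool) → Bool) : ℕ :=
  sInf {d : ℕ | ∃ T : DTree n, Computes T f ∧ T.depth = d}

/-- The weight of a boolean function: the number of inputs mapped to `true`. -/
def wt {n : ℕ} (f : (Fin n → Bool) → Bool) : ℕ :=
  (Finset.univ.filter fun x : Fin n → Bool => f x = true).card

/-- `S` is a certificate of `f` on input `x`. -/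
def IsCert {n : ℕ} (f : (Fin n → Bool) → Bool) (x : Fin n → Bool) (S : Finset (Fin n)) : Prop :=
  ∀ y : Fin n → Bool, (∀ i ∈ S, y i = x i) → f y = f x

/-- Certificate complexity of `f` on input `x`. -/
noncomputable def certC {n : ℕ} (f : (Fin n → Bool) → Bool) (x : Fin n → Bool) : ℕ :=
  sInf {k : ℕ | ∃ S : Finset (Fin n), IsCert f x S ∧ S.card = k}

/-- The weight of the subfunction `f|ρ`, where `ρ : Fin n → Option Bool` is a restriction:
the number of inputs consistent with `ρ` on which `f` outputs `true`. -/
def wtR {n : ℕ} (f : (Fin n → Bool) → Bool) (ρ : Fin n → Option Bool) : ℕ :=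
  (Finset.univ.filter fun x : Fin n → Bool =>
    f x = true ∧ ∀ i : Fin n, ∀ b : Bool, ρ i = some b → x i = b).card

/-- Number of coordinates fixed by a restriction. -/
def suppCard {n : ℕ} (ρ : Fin n → Option Bool) : ℕ :=
  (Finset.univ.filter fun i : Fin n => (ρ i).isSome).card

/-- The restriction given by the first `j` steps of a decision-tree path `L`. -/
def PathRho {n : ℕ} (L : List (Fin n × Bool)) (j : ℕ) : Fin n → Option Bool :=
  fun i => (L.take j).lookup i

/-- The path `L` is `δ`-parity with respect to `f`. -/
def DeltaParityPath {n : ℕ} (f : (Fin n → Bool) → Bool) (δ : ℝ)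
    (L : List (Fin n × Bool)) : Prop :=
  ∀ j : ℕ, 1 ≤ j → j ≤ L.length →
    (1/2) * (1 - δ) * (wtR f (PathRho L (j-1)) : ℝ) ≤ (wtR f (PathRho L j) : ℝ) ∧
    (wtR f (PathRho L j) : ℝ) ≤ (1/2) * (1 + δ) * (wtR f (PathRho L (j-1)) : ℝ)

/-- `f` is a `(t,δ)`-parity function: every path of length at most `t` is δ-parity. -/
def ParityFun {n : ℕ} (f : (Fin n → Bool) → Bool) (t : ℕ) (δ : ℝ) : Prop :=
  ∀ L : List (Fin n × Bool), (L.map Prod.fst).Nodup → L.length ≤ t → DeltaParityPath f δ L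

/-- The subfunction `f|ρ`, viewed as a function on the full cube. -/
def restrictFun {n : ℕ} (f : (Fin n → Bool) → Bool) (ρ : Fin n → Option Bool) :
    (Fin n → Bool) → Bool :=
  fun x => f fun i => (ρ i).getD (x i)

/-- Probability mass of the restriction `ρ` under the `p`-random restriction `R_p`. -/
noncomputable def rpMass {n : ℕ} (p : ℝ) (ρ : Fin n → Option Bool) : ℝ :=
  ∏ i : Fin n, if (ρ i).isSome then (1 - p) / 2 else p

/-- `f` is `λ`-critical. -/
def IsCritical {n : ℕ} (lam : ℝ) (f : (Fin n → Bool) → Bool) : Prop :=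
  ∀ p : ℝ, 0 ≤ p → p ≤ 1 → ∀ t : ℕ,
    (∑ ρ : Fin n → Option Bool,
      if t ≤ Dworst (restrictFun f ρ) then rpMass p ρ else 0) ≤ (p * lam) ^ t

namespace Stmt6Aux
open Finset
attribute [local instance] Classical.propDecidable

variable {n : ℕ}

def Agree (A : Finset (Fin n → Bool)) (i : Fin n) : Prop :=
  ∀ a ∈ A, ∀ b ∈ A, a i = b i

def PairPat (A : Finset (Fin n → Bool)) (i j : Fin n) : Prop :=
  (∀ a ∈ A, a i = a j) ∨ (∀ a ∈ A, a i = !(a j))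

noncomputable def pick (C : Finset (Fin n)) (A : Finset (Fin n → Bool)) (hC : C.Nonempty) :
    Fin n :=
  if h1 : ∃ i ∈ C, Agree A i then h1.choose
  else if h2 : ∃ i ∈ C, ∃ j ∈ C, i ≠ j ∧ PairPat A i j then h2.choose
  else hC.choose

lemma pick_mem (C : Finset (Fin n)) (A : Finset (Fin n → Bool)) (hC : C.Nonempty) :
    pick C A hC ∈ C := by
  unfold pick
  split_ifs with h1 h2
  · exact h1.choose_spec.1
  · exact h2.choose_spec.1
  · exact hC.choose_spec

lemma pick_agree (C : Finset (Fin n)) (A : Finset (Fin n → Bool)) (hC : C.Nonempty)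
    (h1 : ∃ i ∈ C, Agree A i) : Agree A (pick C A hC) := by
  unfold pick
  rw [dif_pos h1]
  exact h1.choose_spec.2

lemma pick_pair (C : Finset (Fin n)) (A : Finset (Fin n → Bool)) (hC : C.Nonempty)
    (h1 : ¬ ∃ i ∈ C, Agree A i) (h2 : ∃ i ∈ C, ∃ j ∈ C, i ≠ j ∧ PairPat A i j) :
    ∃ j ∈ C, j ≠ pick C A hC ∧ PairPat A (pick C A hC) j := by
  unfold pick
  rw [dif_neg h1, dif_pos h2]
  obtain ⟨hmem, j, hj, hne, hp⟩ := h2.choose_spec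
  exact ⟨j, hj, hne.symm, hp⟩

noncomputable def build (C : Finset (Fin n)) (A : Finset (Fin n → Bool)) : DTree n :=
  if _hA : A = ∅ then .leaf false
  else if hC : C = ∅ then .leaf true
  else
    let i := pick C A (nonempty_iff_ne_empty.mpr hC)
    .node i (build (C.erase i) (A.filter fun a => a i = false))
            (build (C.erase i) (A.filter fun a => a i = true))
termination_by C.card
decreasing_by
  all_goals exact Finset.card_erase_lt_of_mem (pick_mem _ _ _)

noncomputable def ecost : DTree n → ℝ
  | .leaf _ => 0
  | .node _ t0 t1 => 1 + (ecost t0 + ecost t1) / 2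

def RO : DTree n → Finset (Fin n) → Prop
  | .leaf _, _ => True
  | .node i t0 t1, S => i ∈ S ∧ RO t0 (S.erase i) ∧ RO t1 (S.erase i)

lemma build_empty (C : Finset (Fin n)) : build C (∅ : Finset (Fin n → Bool)) = .leaf false := by
  rw [build]
  simp

lemma ecost_build_empty (C : Finset (Fin n)) :
    ecost (build C (∅ : Finset (Fin n → Bool))) = 0 := by
  rw [build_empty]; rfl

lemma build_node (C : Finset (Fin n)) (A : Finset (Fin n → Bool)) (hA : A ≠ ∅) (hC : C ≠ ∅) :
    build C A = .node (pick C A (nonempty_iff_ne_empty.mpr hC))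
      (build (C.erase (pick C A (nonempty_iff_ne_empty.mpr hC)))
        (A.filter fun a => a (pick C A (nonempty_iff_ne_empty.mpr hC)) = false))
      (build (C.erase (pick C A (nonempty_iff_ne_empty.mpr hC)))
        (A.filter fun a => a (pick C A (nonempty_iff_ne_empty.mpr hC)) = true)) := by
  conv_lhs => rw [build]
  rw [dif_neg hA, dif_neg hC]

end Stmt6Aux
namespace Stmt6Aux

noncomputable def g (w c : ℕ) : ℝ :=
  if w = 0 then 0 else 4 - 4 / 2 ^ w + 2 ^ (2 ^ w) / (4 * 2 ^ c)

lemma two_le_pow {w : ℕ} (hw : 1 ≤ w) : (2:ℝ) ≤ 2 ^ w := by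
  calc (2:ℝ) = 2 ^ 1 := (pow_one 2).symm
  _ ≤ 2 ^ w := pow_le_pow_right₀ one_le_two hw

lemma g_pos_formula (w c : ℕ) (hw : 1 ≤ w) :
    g w c = 4 - 4 / 2 ^ w + 2 ^ (2 ^ w) / (4 * 2 ^ c) := by
  unfold g; rw [if_neg (by omega)]

lemma g_nonneg (w c : ℕ) : 0 ≤ g w c := by
  unfold g
  split_ifs with h
  · exact le_refl _
  · have h1 : (4:ℝ) / 2 ^ w ≤ 4 := by
      apply div_le_self (by norm_num)
      calc (1:ℝ) = 2 ^ 0 := by norm_num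
      _ ≤ 2 ^ w := pow_le_pow_right₀ one_le_two (Nat.zero_le w)
    have h2 : (0:ℝ) ≤ 2 ^ (2 ^ w) / (4 * 2 ^ c) := by positivity
    linarith

lemma g_mono {w' w : ℕ} (c : ℕ) (h : w' ≤ w) : g w' c ≤ g w c := by
  rcases Nat.eq_zero_or_pos w' with h0 | h0
  · rw [h0]; unfold g; rw [if_pos rfl]; exact g_nonneg w c
  have hw : 1 ≤ w := le_trans h0 h
  rw [g_pos_formula _ _ h0, g_pos_formula _ _ hw]
  have e1 : (4:ℝ) / 2 ^ w ≤ 4 / 2 ^ w' := by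
    apply div_le_div_of_nonneg_left (by norm_num) (by positivity)
    exact pow_le_pow_right₀ one_le_two h
  have e2 : (2:ℝ) ^ (2 ^ w') / (4 * 2 ^ c) ≤ 2 ^ (2 ^ w) / (4 * 2 ^ c) := by
    have hle : (2:ℝ) ^ (2 ^ w') ≤ 2 ^ (2 ^ w) :=
      pow_le_pow_right₀ one_le_two (Nat.pow_le_pow_right (by norm_num) h)
    exact (div_le_div_iff_of_pos_right (by positivity)).mpr hle
  linarith

-- agree step
lemma g_step_agree {w : ℕ} (k : ℕ) (hw : 1 ≤ w) : 1 + g w k / 2 ≤ g w (k + 1) := by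
  rw [g_pos_formula _ _ hw, g_pos_formula _ _ hw]
  have h2 : (2:ℝ) ≤ 2 ^ w := two_le_pow hw
  have hx : (4:ℝ) / 2 ^ w ≤ 2 := by
    rw [div_le_iff₀ (by positivity)]; linarith
  have e : (2:ℝ) ^ (2 ^ w) / (4 * 2 ^ (k + 1)) = 2 ^ (2 ^ w) / (4 * 2 ^ k) / 2 := by
    rw [pow_succ]; ring
  rw [e]
  have hx0 : (0:ℝ) < 4 / 2 ^ w := by positivity
  linarith

-- pair step : w = v+1, c = k+2
lemma g_step_pair {v : ℕ} (k : ℕ) (hv : 1 ≤ v) : 2 + g v k / 2 ≤ g (v + 1) (k + 2) := by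
  rw [g_pos_formula _ _ hv, g_pos_formula _ _ (by omega)]
  set a := (2:ℝ) ^ v with ha
  set b := (2:ℝ) ^ k with hb
  set Q := (2:ℝ) ^ (2 ^ v) with hQ
  have hapos : 0 < a := by positivity
  have hbpos : 0 < b := by positivity
  have hQ2 : (2:ℝ) ≤ Q := two_le_pow (Nat.one_le_two_pow)
  have e1 : (2:ℝ) ^ (v + 1) = 2 * a := by rw [pow_succ]; ring
  have e2 : (2:ℝ) ^ (k + 2) = 4 * b := by rw [pow_succ, pow_succ]; ring
  have e3 : (2:ℝ) ^ (2 ^ (v + 1)) = Q ^ 2 := by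
    rw [show 2 ^ (v + 1) = 2 ^ v * 2 from by rw [pow_succ], pow_mul]
  rw [e1, e2, e3]
  have e4 : (4:ℝ) / (2 * a) = (4 / a) / 2 := by ring
  have key : Q / (4 * b) / 2 ≤ Q ^ 2 / (4 * (4 * b)) := by
    have e5 : Q ^ 2 / (4 * (4 * b)) = (Q / (4 * b) / 2) * (Q / 2) := by
      field_simp; ring
    rw [e5]
    apply le_mul_of_one_le_right (by positivity)
    linarith
  rw [e4]
  linarith

-- split step : w = v+1, c = k+1, condition k+2 ≤ 2^v
lemma g_step_split {v : ℕ} (k : ℕ) (hv : 1 ≤ v) (hk : k + 2 ≤ 2 ^ v) :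
    1 + g v k ≤ g (v + 1) (k + 1) := by
  rw [g_pos_formula _ _ hv, g_pos_formula _ _ (by omega)]
  set a := (2:ℝ) ^ v with ha
  set b := (2:ℝ) ^ k with hb
  set Q := (2:ℝ) ^ (2 ^ v) with hQ
  have hapos : 0 < a := by positivity
  have hbpos : 0 < b := by positivity
  have hQ4 : (4:ℝ) ≤ Q := by
    rw [hQ, show (4:ℝ) = 2 ^ 2 from by norm_num]
    apply pow_le_pow_right₀ one_le_two
    calc 2 = 1 + 1 := rfl
    _ ≤ 2 ^ v := by omega
  have hbQ : 4 * b ≤ Q := by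
    rw [hb, hQ, show (4:ℝ) * 2 ^ k = 2 ^ (k + 2) from by rw [pow_succ, pow_succ]; ring]
    exact pow_le_pow_right₀ one_le_two hk
  have e1 : (2:ℝ) ^ (v + 1) = 2 * a := by rw [pow_succ]; ring
  have e2 : (2:ℝ) ^ (k + 1) = 2 * b := by rw [pow_succ]; ring
  have e3 : (2:ℝ) ^ (2 ^ (v + 1)) = Q ^ 2 := by
    rw [show 2 ^ (v + 1) = 2 ^ v * 2 from by rw [pow_succ], pow_mul]
  rw [e1, e2, e3]
  have e4 : (4:ℝ) / (2 * a) = (4 / a) / 2 := by ring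
  have e5 : Q ^ 2 / (4 * (2 * b)) - Q / (4 * b) = Q * (Q - 2) / (8 * b) := by
    field_simp; ring
  have key : 1 ≤ Q ^ 2 / (4 * (2 * b)) - Q / (4 * b) := by
    rw [e5, le_div_iff₀ (by positivity)]
    nlinarith
  have hx0 : (0:ℝ) < 4 / a := by positivity
  rw [e4]
  linarith

lemma g_final {w nn : ℕ} (h : 2 ^ w < nn) : g w nn ≤ 5 := by
  rcases Nat.eq_zero_or_pos w with h0 | h0
  · rw [h0]; unfold g; rw [if_pos rfl]; norm_num
  rw [g_pos_formula _ _ h0]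
  set P := (2:ℝ) ^ (2 ^ w) with hP
  have hPpos : 0 < P := by positivity
  have hpow : 2 * P ≤ 2 ^ nn := by
    rw [hP, show (2:ℝ) * 2 ^ (2 ^ w) = 2 ^ (2 ^ w + 1) from by rw [pow_succ]; ring]
    exact pow_le_pow_right₀ one_le_two (by omega)
  have h1 : P / (4 * 2 ^ nn) ≤ P / (4 * (2 * P)) := by
    apply div_le_div_of_nonneg_left (le_of_lt hPpos) (by positivity)
    linarith
  have h2 : P / (4 * (2 * P)) = 1 / 8 := by field_simp; ring
  have h3 : (0:ℝ) < 4 / 2 ^ w := by positivity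
  rw [h2] at h1
  linarith

end Stmt6Aux
namespace Stmt6Aux
open Finset

variable {n : ℕ}

lemma card_filter_apply_eq {α : Type*} [Fintype α] [DecidableEq α] (p : α) (bb : Bool) :
    (univ.filter fun gg : α → Bool => gg p = bb).card = 2 ^ (Fintype.card α - 1) := by
  classical
  have e : {gg : α → Bool // gg p = bb} ≃ ({x : α // x ≠ p} → Bool) :=
    { toFun := fun g x => g.1 x.1
      invFun := fun h => ⟨fun x => if hx : x = p then bb else h ⟨x, hx⟩, by simp⟩
      left_inv := by
        intro g
        ext x
        by_cases hx : x = p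
        · subst hx; simp [g.2]
        · simp [hx]
      right_inv := by
        intro h
        funext x
        simp [x.2] }
  rw [← Fintype.card_subtype]
  rw [Fintype.card_congr e, Fintype.card_fun, Fintype.card_bool]
  congr 1
  have h1 : Fintype.card { x : α // x ≠ p } = Fintype.card α - Fintype.card {x : α // x = p} :=
    Fintype.card_subtype_compl _
  rw [h1, Fintype.card_subtype_eq]

lemma pigeonhole (A : Finset (Fin n → Bool)) (a₀ : Fin n → Bool) (ha₀ : a₀ ∈ A)
    (C : Finset (Fin n))
    (hag : ∀ i ∈ C, ¬Agree A i)
    (hpair : ∀ i ∈ C, ∀ j ∈ C, i ≠ j → ¬PairPat A i j) :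
    C.card ≤ 2 ^ (A.card - 1) - 1 := by
  classical
  let Q : Fin n → ({a : Fin n → Bool // a ∈ A} → Bool) := fun i a => xor (a.1 i) (a₀ i)
  set T := ((univ.filter fun gg : {a : Fin n → Bool // a ∈ A} → Bool =>
      gg ⟨a₀, ha₀⟩ = false).erase (fun _ => false)) with hT
  have hmaps : ∀ i ∈ C, Q i ∈ T := by
    intro i hi
    refine Finset.mem_erase.mpr ⟨?_, Finset.mem_filter.mpr ⟨mem_univ _, by simp [Q]⟩⟩
    intro hconst
    apply hag i hi
    intro a ha b hb
    have h1 : Q i ⟨a, ha⟩ = Q i ⟨b, hb⟩ := by rw [hconst]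
    simp only [Q] at h1
    revert h1
    cases hai : a i <;> cases hbi : b i <;> cases h0i : a₀ i <;> simp
  have hinj : Set.InjOn Q ↑C := by
    intro i hi' j hj' hQ
    have hi : i ∈ C := Finset.mem_coe.mp hi'
    have hj : j ∈ C := Finset.mem_coe.mp hj'
    by_contra hne
    apply hpair i hi j hj hne
    by_cases h0 : a₀ i = a₀ j
    · left
      intro a ha
      have h1 : Q i ⟨a, ha⟩ = Q j ⟨a, ha⟩ := by rw [hQ]
      simp only [Q] at h1
      rw [h0] at h1
      revert h1
      cases hai : a i <;> cases haj : a j <;> cases h0j : a₀ j <;> simp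
    · right
      intro a ha
      have h1 : Q i ⟨a, ha⟩ = Q j ⟨a, ha⟩ := by rw [hQ]
      simp only [Q] at h1
      have h2 : a₀ i = !(a₀ j) := by
        cases hbi : a₀ i <;> cases hbj : a₀ j <;> simp_all
      rw [h2] at h1
      revert h1
      cases hai : a i <;> cases haj : a j <;> cases h0j : a₀ j <;> simp
  have hcard := Finset.card_le_card_of_injOn Q hmaps hinj
  have hmem : (fun _ => false) ∈ (univ.filter fun gg : {a : Fin n → Bool // a ∈ A} → Bool =>
      gg ⟨a₀, ha₀⟩ = false) := Finset.mem_filter.mpr ⟨mem_univ _, rfl⟩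
  have hcf : T.card = 2 ^ (A.card - 1) - 1 := by
    rw [hT, Finset.card_erase_of_mem hmem, card_filter_apply_eq, Fintype.card_coe]
  omega

end Stmt6Aux
namespace Stmt6Aux
open Finset

variable {n : ℕ}

lemma cost_update {t : DTree n} : ∀ {S : Finset (Fin n)}, RO t S → ∀ {i : Fin n}, i ∉ S →
    ∀ (x : Fin n → Bool) (b : Bool), t.cost (Function.update x i b) = t.cost x := by
  induction t with
  | leaf b => intro S _ i _ x b; rfl
  | node j t0 t1 ih0 ih1 =>
    intro S h i hi x b
    obtain ⟨hj, h0, h1⟩ := h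
    have hne : j ≠ i := fun e => hi (e ▸ hj)
    have hx : Function.update x i b j = x j := Function.update_of_ne hne _ _
    have hi' : i ∉ S.erase j := fun h' => hi (Finset.mem_of_mem_erase h')
    simp only [DTree.cost, hx]
    cases hxj : x j <;> simp [ih0 h0 hi', ih1 h1 hi']

lemma sum_cost {t : DTree n} : ∀ {S : Finset (Fin n)}, RO t S →
    ∑ x : Fin n → Bool, (t.cost x : ℝ) = ecost t * 2 ^ n := by
  induction t with
  | leaf b => intro S _; simp [DTree.cost, ecost]
  | node i t0 t1 ih0 ih1 =>
    intro S h
    obtain ⟨hi, h0, h1⟩ := h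
    have hnotin : i ∉ S.erase i := Finset.notMem_erase i S
    -- halving for a subtree not reading i
    have half : ∀ (t' : DTree n), RO t' (S.erase i) → ∀ bb : Bool,
        ∑ x ∈ univ.filter (fun x : Fin n → Bool => x i = bb), (t'.cost x : ℝ)
          = (∑ x : Fin n → Bool, (t'.cost x : ℝ)) / 2 := by
      intro t' h' bb
      have swap : ∑ x ∈ univ.filter (fun x : Fin n → Bool => x i = bb), (t'.cost x : ℝ)
          = ∑ x ∈ univ.filter (fun x : Fin n → Bool => x i = !bb), (t'.cost x : ℝ) := by
        apply Finset.sum_bij' (fun x _ => Function.update x i (!bb))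
          (fun x _ => Function.update x i bb)
        case hi => intro x hx; simp [Function.update_self]
        case hj => intro x hx; simp [Function.update_self]
        case left_neg =>
          intro x hx
          simp only [mem_filter] at hx
          rw [Function.update_idem, ← hx.2, Function.update_eq_self]
        case right_neg =>
          intro x hx
          simp only [mem_filter] at hx
          rw [Function.update_idem, ← hx.2, Function.update_eq_self]
        case h =>
          intro x hx
          rw [cost_update h' hnotin]
      have htot : ∑ x ∈ univ.filter (fun x : Fin n → Bool => x i = bb), (t'.cost x : ℝ)
          + ∑ x ∈ univ.filter (fun x : Fin n → Bool => x i = !bb), (t'.cost x : ℝ)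
          = ∑ x : Fin n → Bool, (t'.cost x : ℝ) := by
        rw [← Finset.sum_filter_add_sum_filter_not univ (fun x : Fin n → Bool => x i = bb)]
        congr 1
        apply Finset.sum_congr _ (fun _ _ => rfl)
        apply Finset.filter_congr
        intro x _
        cases bb <;> simp
      rw [swap] at htot ⊢
      linarith
    -- main computation
    have hsum : ∑ x : Fin n → Bool, ((DTree.node i t0 t1).cost x : ℝ)
        = ∑ x : Fin n → Bool, (1 + if x i then (t1.cost x : ℝ) else (t0.cost x : ℝ)) := by
      apply Finset.sum_congr rfl
      intro x _
      simp only [DTree.cost]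
      push_cast
      cases hxi : x i <;> simp
    rw [hsum]
    rw [Finset.sum_add_distrib]
    have hcard : ∑ _x : Fin n → Bool, (1:ℝ) = 2 ^ n := by
      simp [Finset.card_univ]
    have hsplit : ∑ x : Fin n → Bool, (if x i then (t1.cost x : ℝ) else (t0.cost x : ℝ))
        = ∑ x ∈ univ.filter (fun x : Fin n → Bool => x i = true), (t1.cost x : ℝ)
        + ∑ x ∈ univ.filter (fun x : Fin n → Bool => x i = false), (t0.cost x : ℝ) := by
      rw [← Finset.sum_filter_add_sum_filter_not univ (fun x : Fin n → Bool => x i = true)]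
      congr 1
      · apply Finset.sum_congr rfl
        intro x hx
        simp only [mem_filter] at hx
        rw [if_pos hx.2]
      · apply Finset.sum_congr
        · apply Finset.filter_congr
          intro x _
          simp
        · intro x hx
          simp only [mem_filter] at hx
          rw [if_neg (by simp [hx.2])]
    rw [hcard, hsplit, half t1 h1 true, half t0 h0 false, ih1 h1, ih0 h0]
    show (2:ℝ) ^ n + (ecost t1 * 2 ^ n / 2 + ecost t0 * 2 ^ n / 2)
        = ecost (DTree.node i t0 t1) * 2 ^ n
    simp only [ecost]
    ring

lemma RO_build : ∀ (c : ℕ) (C : Finset (Fin n)) (A : Finset (Fin n → Bool)), C.card = c →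
    RO (build C A) C := by
  intro c
  induction c using Nat.strong_induction_on with
  | _ c IH =>
    intro C A hc
    by_cases hA : A = ∅
    · rw [hA, build_empty]; trivial
    by_cases hC : C = ∅
    · rw [build]; rw [dif_neg hA, dif_pos hC]; trivial
    rw [build_node C A hA hC]
    set i := pick C A (nonempty_iff_ne_empty.mpr hC) with hidef
    have hmem : i ∈ C := pick_mem _ _ _
    have hlt : (C.erase i).card < c := hc ▸ Finset.card_erase_lt_of_mem hmem
    exact ⟨hmem, IH _ hlt _ _ rfl, IH _ hlt _ _ rfl⟩

lemma avgCost_eq_ecost (C : Finset (Fin n)) (A : Finset (Fin n → Bool)) :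
    avgCost (build (univ : Finset (Fin n)) A) = ecost (build (univ : Finset (Fin n)) A) := by
  unfold avgCost
  rw [sum_cost (RO_build _ (univ : Finset (Fin n)) A rfl)]
  have : (2:ℝ) ^ n ≠ 0 := by positivity
  field_simp

end Stmt6Aux
namespace Stmt6Aux
open Finset

variable {n : ℕ}

lemma eval_build : ∀ (c : ℕ) (C : Finset (Fin n)) (A : Finset (Fin n → Bool))
    (x : Fin n → Bool), C.card = c →
    ((build C A).eval x = true ↔ ∃ a ∈ A, ∀ i ∈ C, a i = x i) := by
  intro c
  induction c using Nat.strong_induction_on with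
  | _ c IH =>
    intro C A x hc
    by_cases hA : A = ∅
    · rw [hA, build_empty]
      simp [DTree.eval]
    by_cases hC : C = ∅
    · rw [build]
      rw [dif_neg hA, dif_pos hC]
      subst hC
      simp only [DTree.eval, Finset.notMem_empty, true_iff]
      obtain ⟨a, ha⟩ := nonempty_iff_ne_empty.mpr hA
      exact ⟨a, ha, by simp⟩
    rw [build_node C A hA hC]
    set i := pick C A (nonempty_iff_ne_empty.mpr hC) with hidef
    have hmem : i ∈ C := pick_mem _ _ _
    have hlt : (C.erase i).card < c := hc ▸ Finset.card_erase_lt_of_mem hmem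
    simp only [DTree.eval]
    cases hxi : x i
    · simp only [Bool.false_eq_true, if_false]
      rw [IH _ hlt _ _ _ rfl]
      constructor
      · rintro ⟨a, haf, herase⟩
        rw [Finset.mem_filter] at haf
        refine ⟨a, haf.1, ?_⟩
        intro j hj
        by_cases hji : j = i
        · rw [hji, haf.2, hxi]
        · exact herase j (Finset.mem_erase.mpr ⟨hji, hj⟩)
      · rintro ⟨a, ha, hall⟩
        refine ⟨a, Finset.mem_filter.mpr ⟨ha, by rw [hall i hmem, hxi]⟩, ?_⟩
        intro j hj
        exact hall j (Finset.mem_of_mem_erase hj)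
    · simp only [if_true]
      rw [IH _ hlt _ _ _ rfl]
      constructor
      · rintro ⟨a, haf, herase⟩
        rw [Finset.mem_filter] at haf
        refine ⟨a, haf.1, ?_⟩
        intro j hj
        by_cases hji : j = i
        · rw [hji, haf.2, hxi]
        · exact herase j (Finset.mem_erase.mpr ⟨hji, hj⟩)
      · rintro ⟨a, ha, hall⟩
        refine ⟨a, Finset.mem_filter.mpr ⟨ha, by rw [hall i hmem, hxi]⟩, ?_⟩
        intro j hj
        exact hall j (Finset.mem_of_mem_erase hj)

lemma computes_build (f : (Fin n → Bool) → Bool) :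
    Computes (build (univ : Finset (Fin n)) (univ.filter fun a => f a = true)) f := by
  intro x
  have hiff := eval_build ((univ : Finset (Fin n)).card) univ
    (univ.filter fun a => f a = true) x rfl
  cases hfx : f x
  · rw [← Bool.not_eq_true]
    rw [hiff]
    rintro ⟨a, ha, hall⟩
    rw [Finset.mem_filter] at ha
    have : a = x := funext fun i => hall i (Finset.mem_univ i)
    rw [this] at ha
    rw [ha.2] at hfx
    simp at hfx
  · rw [hiff.mpr ⟨x, Finset.mem_filter.mpr ⟨Finset.mem_univ x, hfx⟩, fun i _ => rfl⟩]

-- helper: agree step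
lemma ecost_build_agree (C : Finset (Fin n)) (A : Finset (Fin n → Bool))
    (hA : A ≠ ∅) (hC : C ≠ ∅) (hag : ∃ i ∈ C, Agree A i)
    (IH : ∀ (C' : Finset (Fin n)) (A' : Finset (Fin n → Bool)), C'.card < C.card →
      ecost (build C' A') ≤ g A'.card C'.card) :
    ecost (build C A) ≤ 1 + g A.card (C.card - 1) / 2 := by
  rw [build_node C A hA hC]
  set i := pick C A (nonempty_iff_ne_empty.mpr hC) with hidef
  have hmem : i ∈ C := pick_mem _ _ _
  have hAg : Agree A i := pick_agree _ _ _ hag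
  obtain ⟨a₀, ha₀⟩ := nonempty_iff_ne_empty.mpr hA
  have hcard' : (C.erase i).card = C.card - 1 := Finset.card_erase_of_mem hmem
  have hlt : (C.erase i).card < C.card := Finset.card_erase_lt_of_mem hmem
  cases hv : a₀ i
  · have hfull : A.filter (fun a => a i = false) = A := by
      apply Finset.filter_true_of_mem
      intro a ha
      rw [hAg a ha a₀ ha₀, hv]
    have hempty : A.filter (fun a => a i = true) = ∅ := by
      apply Finset.filter_eq_empty_iff.mpr
      intro a ha
      rw [hAg a ha a₀ ha₀, hv]
      simp
    rw [hfull, hempty]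
    simp only [ecost, ecost_build_empty]
    have := IH (C.erase i) A hlt
    rw [hcard'] at this
    linarith
  · have hfull : A.filter (fun a => a i = true) = A := by
      apply Finset.filter_true_of_mem
      intro a ha
      rw [hAg a ha a₀ ha₀, hv]
    have hempty : A.filter (fun a => a i = false) = ∅ := by
      apply Finset.filter_eq_empty_iff.mpr
      intro a ha
      rw [hAg a ha a₀ ha₀, hv]
      simp
    rw [hfull, hempty]
    simp only [ecost, ecost_build_empty]
    have := IH (C.erase i) A hlt
    rw [hcard'] at this
    linarith

end Stmt6Aux
namespace Stmt6Aux
open Finset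

variable {n : ℕ}

lemma ecost_build_le : ∀ (c : ℕ) (C : Finset (Fin n)) (A : Finset (Fin n → Bool)),
    C.card = c → ecost (build C A) ≤ g A.card C.card := by
  intro c
  induction c using Nat.strong_induction_on with
  | _ c IH =>
    intro C A hc
    have IH' : ∀ (C' : Finset (Fin n)) (A' : Finset (Fin n → Bool)), C'.card < C.card →
        ecost (build C' A') ≤ g A'.card C'.card := by
      intro C' A' hlt
      exact IH C'.card (hc ▸ hlt) C' A' rfl
    by_cases hA : A = ∅
    · rw [hA, build_empty]
      simp only [ecost]
      exact g_nonneg _ _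
    by_cases hC : C = ∅
    · rw [build, dif_neg hA, dif_pos hC]
      simp only [ecost]
      exact g_nonneg _ _
    have hCne : C.Nonempty := nonempty_iff_ne_empty.mpr hC
    have hAne : A.Nonempty := nonempty_iff_ne_empty.mpr hA
    have hw1 : 1 ≤ A.card := Finset.card_pos.mpr hAne
    have hc1 : 1 ≤ C.card := Finset.card_pos.mpr hCne
    by_cases hag : ∃ i ∈ C, Agree A i
    · -- agree case
      have hmain := ecost_build_agree C A hA hC hag IH'
      obtain ⟨k, hk⟩ : ∃ k, C.card = k + 1 := ⟨C.card - 1, by omega⟩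
      rw [hk] at hmain ⊢
      simp only [Nat.add_sub_cancel] at hmain
      exact le_trans hmain (g_step_agree k hw1)
    · -- no agree coordinate anywhere in C
      have hagAll : ∀ i ∈ C, ¬Agree A i := by push_neg at hag; exact hag
      -- weight at least 2
      have hw2 : 2 ≤ A.card := by
        obtain ⟨i₀, hi₀⟩ := hCne
        have h := hagAll i₀ hi₀
        unfold Agree at h
        push_neg at h
        obtain ⟨a, ha, b, hb, hab⟩ := h
        have hne : a ≠ b := fun e => hab (by rw [e])
        exact Finset.one_lt_card.mpr ⟨a, ha, b, hb, hne⟩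
      rw [build_node C A hA hC]
      set i := pick C A (nonempty_iff_ne_empty.mpr hC) with hidef
      have hmem : i ∈ C := pick_mem _ _ _
      have hcard' : (C.erase i).card = C.card - 1 := Finset.card_erase_of_mem hmem
      have hlt : (C.erase i).card < C.card := Finset.card_erase_lt_of_mem hmem
      -- i splits A
      have hsplit : ∀ bb : Bool, (A.filter fun a => a i = bb).Nonempty ∧
          (A.filter fun a => a i = bb).card < A.card := by
        have h := hagAll i hmem
        unfold Agree at h
        push_neg at h
        obtain ⟨a, ha, b, hb, hab⟩ := h
        intro bb
        have key : ∀ bb : Bool, (A.filter fun a => a i = bb).Nonempty := by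
          intro bb
          cases hai : a i <;> cases hbi : b i <;> cases bb <;>
            first
            | exact ⟨a, Finset.mem_filter.mpr ⟨ha, hai⟩⟩
            | exact ⟨b, Finset.mem_filter.mpr ⟨hb, hbi⟩⟩
            | (exfalso; rw [hai, hbi] at hab; exact hab rfl)
        constructor
        · exact key bb
        · apply Finset.card_lt_card
          apply Finset.filter_ssubset.mpr
          obtain ⟨w, hw⟩ := key (!bb)
          rw [Finset.mem_filter] at hw
          exact ⟨w, hw.1, by rw [hw.2]; cases bb <;> simp⟩
      by_cases hp : ∃ i' ∈ C, ∃ j ∈ C, i' ≠ j ∧ PairPat A i' j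
      · -- pair case
        obtain ⟨j, hjC, hji, hpp⟩ := pick_pair C A (nonempty_iff_ne_empty.mpr hC) hag hp
        have hjC' : j ∈ C.erase i := Finset.mem_erase.mpr ⟨hji, hjC⟩
        have hc2 : 2 ≤ C.card := Finset.one_lt_card.mpr ⟨i, hmem, j, hjC, fun e => hji e.symm⟩
        have hCe : C.erase i ≠ ∅ := fun e => by rw [e] at hjC'; exact absurd hjC' (by simp)
        -- each child has an agreeing coordinate j
        have hchild : ∀ bb : Bool,
            ecost (build (C.erase i) (A.filter fun a => a i = bb))
              ≤ 1 + g (A.filter fun a => a i = bb).card ((C.erase i).card - 1) / 2 := by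
          intro bb
          apply ecost_build_agree
          · exact nonempty_iff_ne_empty.mp (hsplit bb).1
          · exact hCe
          · refine ⟨j, hjC', ?_⟩
            intro a ha b hb
            rw [Finset.mem_filter] at ha hb
            rcases hpp with hsame | hcompl
            · rw [← hsame a ha.1, ← hsame b hb.1, ha.2, hb.2]
            · have h1 := hcompl a ha.1
              have h2 := hcompl b hb.1
              have e1 : a j = !(a i) := by rw [h1, Bool.not_not]
              have e2 : b j = !(b i) := by rw [h2, Bool.not_not]
              rw [e1, e2, ha.2, hb.2]
          · intro C'' A'' hlt''
            exact IH' C'' A'' (lt_trans hlt'' hlt)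
        -- combine
        have hb0 := hchild false
        have hb1 := hchild true
        have hm0 : g (A.filter fun a => a i = false).card ((C.erase i).card - 1)
            ≤ g (A.card - 1) (C.card - 2) := by
          rw [hcard', Nat.sub_sub]
          exact g_mono _ (Nat.le_pred_of_lt (hsplit false).2)
        have hm1 : g (A.filter fun a => a i = true).card ((C.erase i).card - 1)
            ≤ g (A.card - 1) (C.card - 2) := by
          rw [hcard', Nat.sub_sub]
          exact g_mono _ (Nat.le_pred_of_lt (hsplit true).2)
        have hfin := g_step_pair (v := A.card - 1) (C.card - 2) (Nat.le_pred_of_lt hw2)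
        have ev : A.card - 1 + 1 = A.card := Nat.sub_add_cancel hw1
        have ek : C.card - 2 + 2 = C.card := Nat.sub_add_cancel hc2
        rw [ev, ek] at hfin
        simp only [ecost]
        linarith
      · -- split case: pigeonhole
        have hpAll : ∀ i' ∈ C, ∀ j ∈ C, i' ≠ j → ¬PairPat A i' j := by
          push_neg at hp; exact hp
        obtain ⟨a₀, ha₀⟩ := hAne
        have hpig := pigeonhole A a₀ ha₀ C hagAll hpAll
        have hb0 := IH' (C.erase i) (A.filter fun a => a i = false) hlt
        have hb1 := IH' (C.erase i) (A.filter fun a => a i = true) hlt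
        have hm0 : g (A.filter fun a => a i = false).card (C.erase i).card
            ≤ g (A.card - 1) (C.card - 1) := by
          rw [hcard']
          exact g_mono _ (Nat.le_pred_of_lt (hsplit false).2)
        have hm1 : g (A.filter fun a => a i = true).card (C.erase i).card
            ≤ g (A.card - 1) (C.card - 1) := by
          rw [hcard']
          exact g_mono _ (Nat.le_pred_of_lt (hsplit true).2)
        have hP : 1 ≤ 2 ^ (A.card - 1) := Nat.one_le_two_pow
        have hcond : (C.card - 1) + 2 ≤ 2 ^ (A.card - 1) := by
          have h1 : C.card - 1 + 2 = C.card + 1 := by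
            rw [show C.card - 1 + 2 = C.card - 1 + 1 + 1 from rfl, Nat.sub_add_cancel hc1]
          rw [h1]
          have h2 : C.card + 1 ≤ 2 ^ (A.card - 1) - 1 + 1 := Nat.add_le_add_right hpig 1
          rwa [Nat.sub_add_cancel hP] at h2
        have hfin := g_step_split (v := A.card - 1) (C.card - 1)
          (Nat.le_pred_of_lt hw2) hcond
        have ev : A.card - 1 + 1 = A.card := Nat.sub_add_cancel hw1
        have ek : C.card - 1 + 1 = C.card := Nat.sub_add_cancel hc1
        rw [ev, ek] at hfin
        simp only [ecost]
        linarith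

end Stmt6Aux

theorem stmt6 (n : ℕ) (hn : 2 ≤ n) (f : (Fin n → Bool) → Bool)
    (h : (wt f : ℝ) < Real.logb 2 n) :
    Dave f ≤ 5 := by
  classical
  -- from the hypothesis, 2 ^ wt f < n
  have hwn : 2 ^ wt f < n := by
    have hn0 : (0:ℝ) < n := by exact_mod_cast lt_of_lt_of_le (by norm_num) hn
    have hlt : (2:ℝ) ^ ((wt f : ℕ) : ℝ) < (2:ℝ) ^ (Real.logb 2 n) :=
      Real.rpow_lt_rpow_of_exponent_lt one_lt_two h
    rw [Real.rpow_logb (by norm_num) (by norm_num) hn0, Real.rpow_natCast] at hlt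
    exact_mod_cast hlt
  set A₀ : Finset (Fin n → Bool) := Finset.univ.filter (fun a => f a = true) with hA₀
  set T : DTree n := Stmt6Aux.build Finset.univ A₀ with hT
  have hcomp : Computes T f := Stmt6Aux.computes_build f
  have huniv : (Finset.univ : Finset (Fin n)).card = n := by
    rw [Finset.card_univ, Fintype.card_fin]
  have hcost : Stmt6Aux.ecost T ≤ Stmt6Aux.g A₀.card n := by
    have := Stmt6Aux.ecost_build_le (Finset.univ : Finset (Fin n)).card Finset.univ A₀ rfl
    rwa [huniv] at this
  have hwt : A₀.card = wt f := rfl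
  have h5 : Stmt6Aux.g A₀.card n ≤ 5 := by
    rw [hwt]
    exact Stmt6Aux.g_final hwn
  have havg : avgCost T = Stmt6Aux.ecost T := Stmt6Aux.avgCost_eq_ecost Finset.univ A₀
  have hDave : Dave f ≤ avgCost T := by
    apply csInf_le
    · refine ⟨0, ?_⟩
      rintro y ⟨T', _, rfl⟩
      unfold avgCost
      positivity
    · exact ⟨T, hcomp, rfl⟩
  rw [havg] at hDave
  linarith
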